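/- Let c < d be real numbers, f : [c, d] → ℝ continuous, and ε > 0. Then there exist N ∈ ℕ and real numbers β₁, …, β_N, b₁, …, b_N, a₁, …, a_N such that for all x ∈ [c, d], |f(x) − ∑_{i=1}^N β_i · max(b_i, a_i + x)| ≤ ε. That is, finite linear combinations of one-dimensional tropical units σ^tr(x) = max(b, a + x) uniformly approximate every continuous function on a compact interval. -/

import Mathlib

open Finset

/-- Auxiliary: `g` is representable on `[c,d]` as a finite linear combination of
tropical units. -/
private def TURep (c d : ℝ) (g : ℝ → ℝ) : Prop :=
  ∃ (N : ℕ) (β b a : Fin N → ℝ),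
    ∀ x ∈ Set.Icc c d, g x = ∑ i, β i * max (b i) (a i + x)

private lemma tur_const (c d r : ℝ) : TURep c d (fun _ => r) := by
  refine ⟨1, fun _ => r, fun _ => 1, fun _ => -|d| - 1, ?_⟩
  intro x hx
  have hxd : x ≤ d := hx.2
  have hd : d ≤ |d| := le_abs_self d
  have hle : -|d| - 1 + x ≤ 1 := by linarith
  simp [max_eq_left hle]

private lemma tur_unit (c d β' b' : ℝ) : TURep c d (fun x => β' * max b' x) :=
  ⟨1, fun _ => β', fun _ => b', fun _ => 0, by intro x _; simp⟩

private lemma tur_add {c d : ℝ} {g₁ g₂ : ℝ → ℝ} (h₁ : TURep c d g₁) (h₂ : TURep c d g₂) :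
    TURep c d (fun x => g₁ x + g₂ x) := by
  obtain ⟨N₁, β₁, b₁, a₁, h1⟩ := h₁
  obtain ⟨N₂, β₂, b₂, a₂, h2⟩ := h₂
  refine ⟨N₁ + N₂, Fin.append β₁ β₂, Fin.append b₁ b₂, Fin.append a₁ a₂, ?_⟩
  intro x hx
  rw [Fin.sum_univ_add]
  simp only [Fin.append_left, Fin.append_right]
  rw [h1 x hx, h2 x hx]

private lemma tur_congr {c d : ℝ} {g₁ g₂ : ℝ → ℝ} (h : ∀ x, g₁ x = g₂ x)
    (h₁ : TURep c d g₁) : TURep c d g₂ := by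
  have : g₁ = g₂ := funext h
  rwa [this] at h₁

private lemma tur_sum {c d : ℝ} (n : ℕ) (t : ℕ → ℝ → ℝ)
    (h : ∀ k < n, TURep c d (t k)) :
    TURep c d (fun x => ∑ k ∈ range n, t k x) := by
  induction n with
  | zero => exact tur_congr (by simp) (tur_const c d 0)
  | succ m ih =>
    refine tur_congr (fun x => ?_)
      (tur_add (ih fun k hk => h k (by omega)) (h m (by omega)))
    rw [Finset.sum_range_succ]

/-- Finite linear combinations of one-dimensional tropical units
`σ^tr(x) = max (b, a + x)` uniformly approximate every continuous function on
a compact interval `[c, d]`. -/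
theorem tropical_unit_universal_approximation (c d : ℝ) (hcd : c < d)
    (f : ℝ → ℝ) (hf : ContinuousOn f (Set.Icc c d)) (ε : ℝ) (hε : 0 < ε) :
    ∃ (N : ℕ) (β b a : Fin N → ℝ),
      ∀ x ∈ Set.Icc c d, |f x - ∑ i, β i * max (b i) (a i + x)| ≤ ε := by
  -- uniform continuity modulus
  have huc : UniformContinuousOn f (Set.Icc c d) :=
    isCompact_Icc.uniformContinuousOn_of_continuous hf
  rw [Metric.uniformContinuousOn_iff] at huc
  obtain ⟨δ, hδ, hmod⟩ := huc (ε / 2) (by linarith)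
  -- grid
  set n : ℕ := ⌈(d - c) / δ⌉₊ + 1 with hn
  have hn0 : 0 < n := Nat.succ_pos _
  have hnR : (0 : ℝ) < n := by exact_mod_cast hn0
  set h : ℝ := (d - c) / n with hhdef
  have hh0 : 0 < h := div_pos (by linarith) hnR
  have hnh : (n : ℝ) * h = d - c := by
    rw [hhdef]; field_simp [hnR.ne']
  have hhδ : h < δ := by
    have h1 : (d - c) / δ < n := by
      have := Nat.le_ceil ((d - c) / δ)
      have : ((⌈(d - c) / δ⌉₊ : ℝ)) < n := by
        have : (⌈(d - c) / δ⌉₊ : ℝ) + 1 = (n : ℝ) := by push_cast [hn]; ring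
        linarith
      linarith [Nat.le_ceil ((d - c) / δ)]
    have h4 : d - c < n * δ := by
      rw [div_lt_iff₀ hδ] at h1; linarith
    rw [hhdef, div_lt_iff₀ hnR]
    linarith
  set X : ℕ → ℝ := fun k => c + k * h with hX
  have hX0 : X 0 = c := by simp [hX]
  have hXmem : ∀ k ≤ n, X k ∈ Set.Icc c d := by
    intro k hk
    constructor
    · have : (0:ℝ) ≤ (k:ℝ) * h := mul_nonneg (by positivity) hh0.le
      simp [hX]; linarith
    · have : (k:ℝ) * h ≤ (n:ℝ) * h := by
        have : (k:ℝ) ≤ n := by exact_mod_cast hk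
        nlinarith
      simp [hX]; linarith [hnh]
  have hXmono : ∀ j k : ℕ, j ≤ k → X j ≤ X k := by
    intro j k hjk
    have : (j:ℝ) ≤ k := by exact_mod_cast hjk
    simp only [hX]
    nlinarith
  set s : ℕ → ℝ := fun k => (f (X (k + 1)) - f (X k)) / h with hs
  set t : ℕ → ℝ → ℝ := fun k x =>
    s k * max (X k) x + (-s k * max (X (k + 1)) x + s k * h) with ht
  set g : ℝ → ℝ := fun x => f c + ∑ k ∈ range n, t k x with hg
  have hrep : TURep c d g := by
    refine tur_add (tur_const c d (f c)) (tur_sum n t fun k _ => ?_)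
    exact tur_add (tur_unit c d (s k) (X k))
      (tur_add (tur_unit c d (-s k) (X (k + 1))) (tur_const c d (s k * h)))
  obtain ⟨N, β, b, a, hgrep⟩ := hrep
  refine ⟨N, β, b, a, fun x hx => ?_⟩
  rw [← hgrep x hx]
  -- find the subinterval [X j, X (j+1)] containing x
  obtain ⟨hcx, hxd⟩ := hx
  set τ : ℝ := (x - c) / h with hτ
  have hτ0 : 0 ≤ τ := div_nonneg (by linarith) hh0.le
  have hτn : τ ≤ n := by
    rw [hτ, div_le_iff₀ hh0]
    nlinarith [hnh]
  set j : ℕ := min ⌊τ⌋₊ (n - 1) with hj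
  have hjn : j < n := by omega
  have hjτ : (j : ℝ) ≤ τ := by
    have h1 : (j : ℝ) ≤ ⌊τ⌋₊ := by exact_mod_cast min_le_left _ _
    exact h1.trans (Nat.floor_le hτ0)
  have hτj : τ ≤ (j : ℝ) + 1 := by
    rcases le_or_gt ⌊τ⌋₊ (n - 1) with hc1 | hc1
    · have : j = ⌊τ⌋₊ := by omega
      rw [this]
      exact (Nat.lt_floor_add_one τ).le
    · have hjn1 : j = n - 1 := by omega
      have hcast : ((n - 1 : ℕ) : ℝ) = (n : ℝ) - 1 := by
        rw [Nat.cast_sub hn0]; norm_num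
      have : (j : ℝ) + 1 = n := by rw [hjn1, hcast]; ring
      linarith
  have hXjx : X j ≤ x := by
    simp only [hX]
    rw [hτ] at hjτ
    have := (le_div_iff₀ hh0).mp hjτ
    linarith
  have hxXj1 : x ≤ X (j + 1) := by
    simp only [hX]
    rw [hτ] at hτj
    have := (div_le_iff₀ hh0).mp hτj
    push_cast
    linarith
  -- compute g x on this subinterval
  have hsum : ∑ k ∈ range n, t k x = (f (X j) - f c) + s j * (x - X j) := by
    rw [← Finset.sum_range_add_sum_Ico _ (show j + 1 ≤ n by omega)]
    have hIco : ∑ k ∈ Finset.Ico (j + 1) n, t k x = 0 := by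
      refine Finset.sum_eq_zero fun k hk => ?_
      have hk1 : j + 1 ≤ k := (Finset.mem_Ico.mp hk).1
      have hxk : x ≤ X k := hxXj1.trans (hXmono _ _ hk1)
      have hxk1 : x ≤ X (k + 1) := hxk.trans (hXmono _ _ (Nat.le_succ k))
      rw [ht]
      simp only [max_eq_left hxk, max_eq_left hxk1]
      simp only [hX]
      push_cast
      ring
    rw [hIco, add_zero, Finset.sum_range_succ]
    have hterm : ∀ k < j, t k x = f (X (k + 1)) - f (X k) := by
      intro k hk
      have hk1 : X (k + 1) ≤ x := (hXmono _ _ (by omega : k + 1 ≤ j)).trans hXjx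
      have hk0 : X k ≤ x := (hXmono _ _ (Nat.le_succ k)).trans hk1
      rw [ht]
      simp only [max_eq_right hk0, max_eq_right hk1, hs]
      field_simp
      ring
    rw [Finset.sum_congr rfl (fun k hk => hterm k (Finset.mem_range.mp hk)),
      Finset.sum_range_sub (fun k => f (X k)), hX0]
    have htj : t j x = s j * (x - X j) := by
      rw [ht]
      simp only [max_eq_right hXjx, max_eq_left hxXj1]
      simp only [hX]
      push_cast
      ring
    rw [htj]
  have hgx : g x = f (X j) + s j * (x - X j) := by
    rw [hg]; simp only []
    rw [hsum]; ring
  -- estimate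
  have hXj_mem : X j ∈ Set.Icc c d := hXmem j (by omega)
  have hXj1_mem : X (j + 1) ∈ Set.Icc c d := hXmem (j + 1) (by omega)
  have hdist1 : dist x (X j) < δ := by
    rw [Real.dist_eq, abs_of_nonneg (by linarith)]
    have hXjj1 : X (j + 1) = X j + h := by simp only [hX]; push_cast; ring
    linarith
  have hdist2 : dist (X (j + 1)) (X j) < δ := by
    rw [Real.dist_eq]
    have hXjj1 : X (j + 1) = X j + h := by simp only [hX]; push_cast; ring
    rw [hXjj1]
    rw [abs_of_nonneg (by linarith)]
    linarith
  have hcf1 : |f x - f (X j)| < ε / 2 := by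
    have := hmod x ⟨hcx, hxd⟩ (X j) hXj_mem hdist1
    rwa [Real.dist_eq] at this
  have hcf2 : |f (X (j + 1)) - f (X j)| < ε / 2 := by
    have := hmod (X (j + 1)) hXj1_mem (X j) hXj_mem hdist2
    rwa [Real.dist_eq] at this
  have hslope : |s j * (x - X j)| ≤ ε / 2 := by
    rw [abs_mul, hs]
    simp only [abs_div, abs_of_pos hh0]
    rw [abs_of_nonneg (by linarith : (0:ℝ) ≤ x - X j)]
    have hxj : x - X j ≤ h := by
      have hXjj1 : X (j + 1) = X j + h := by simp only [hX]; push_cast; ring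
      linarith
    calc |f (X (j + 1)) - f (X j)| / h * (x - X j)
        ≤ |f (X (j + 1)) - f (X j)| / h * h := by
          apply mul_le_mul_of_nonneg_left hxj (by positivity)
      _ = |f (X (j + 1)) - f (X j)| := by field_simp
      _ ≤ ε / 2 := hcf2.le
  calc |f x - g x| = |(f x - f (X j)) - s j * (x - X j)| := by rw [hgx]; ring_nf
    _ ≤ |f x - f (X j)| + |s j * (x - X j)| := abs_sub _ _
    _ ≤ ε / 2 + ε / 2 := add_le_add hcf1.le hslope
    _ = ε := by ring
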